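/- Let a group H act on a tree T fixing a vertex v, and let Y be a nonempty H-invariant subtree of T such that the action of H on the edge set of Y has finitely many orbits. Then Y has finite diameter (the distances between vertices of Y are bounded). -/

import Mathlib

/-- If a group H acts (without inversions) on a tree T fixing a vertex v₀,
and Y is a nonempty H-invariant subtree on which H acts with finitely many orbits of
edges, then Y has finite diameter. -/
theorem invariant_subtree_bounded {H V : Type*} [Group H] [MulAction H V]
    (T : SimpleGraph V) (hT : T.IsTree)
    (hact : ∀ (h : H) (u v : V), T.Adj u v → T.Adj (h • u) (h • v))
    (hni : ∀ (h : H) (u v : V), T.Adj u v → ¬(h • u = v ∧ h • v = u))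
    (v₀ : V) (hfix : ∀ h : H, h • v₀ = v₀)
    (W : Set V) (hWne : W.Nonempty)
    (hWconn : ∀ x ∈ W, ∀ y ∈ W, ∃ p : T.Walk x y, ∀ z ∈ p.support, z ∈ W)
    (hWinv : ∀ (h : H), ∀ x ∈ W, h • x ∈ W)
    (horb : ∃ s : Finset (V × V),
      (∀ pq ∈ s, T.Adj pq.1 pq.2 ∧ pq.1 ∈ W ∧ pq.2 ∈ W) ∧
      ∀ u v : V, T.Adj u v → u ∈ W → v ∈ W →
        ∃ h : H, ∃ pq ∈ s, (h • pq.1 = u ∧ h • pq.2 = v) ∨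
          (h • pq.1 = v ∧ h • pq.2 = u)) :
    ∃ n : ℕ, ∀ x ∈ W, ∀ y ∈ W, ∀ p : T.Walk x y, p.IsPath → p.length ≤ n := by
  classical
  obtain ⟨s, hs1, hs2⟩ := horb
  have hconn := hT.isConnected
  -- the action preserves distances
  have hdist_le : ∀ (h : H) (x y : V), T.dist (h • x) (h • y) ≤ T.dist x y := by
    intro h x y
    obtain ⟨p, hp⟩ := hconn.exists_walk_length_eq_dist x y
    let f : T →g T := ⟨fun z => h • z, fun hadj => hact h _ _ hadj⟩
    calc T.dist (h • x) (h • y) ≤ (p.map f).length := SimpleGraph.dist_le _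
      _ = p.length := p.length_map f
      _ = T.dist x y := hp
  have hdist : ∀ (h : H) (x y : V), T.dist (h • x) (h • y) = T.dist x y := by
    intro h x y
    refine le_antisymm (hdist_le h x y) ?_
    have := hdist_le h⁻¹ (h • x) (h • y)
    simpa using this
  set N : ℕ := s.sup (fun pq => max (T.dist pq.1 v₀) (T.dist pq.2 v₀)) with hN
  -- any vertex of W incident to an edge with both ends in W is at distance ≤ N from v₀
  have hbound : ∀ u z : V, T.Adj u z → u ∈ W → z ∈ W → T.dist u v₀ ≤ N := by
    intro u z hadj hu hz
    obtain ⟨h, pq, hpqs, hcase⟩ := hs2 u z hadj hu hz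
    rcases hcase with ⟨h1, _⟩ | ⟨_, h2⟩
    · calc T.dist u v₀ = T.dist (h • pq.1) (h • v₀) := by rw [h1, hfix]
        _ = T.dist pq.1 v₀ := hdist h _ _
        _ ≤ max (T.dist pq.1 v₀) (T.dist pq.2 v₀) := le_max_left _ _
        _ ≤ N := Finset.le_sup (f := fun pq => max (T.dist pq.1 v₀) (T.dist pq.2 v₀)) hpqs
    · calc T.dist u v₀ = T.dist (h • pq.2) (h • v₀) := by rw [h2, hfix]
        _ = T.dist pq.2 v₀ := hdist h _ _
        _ ≤ max (T.dist pq.1 v₀) (T.dist pq.2 v₀) := le_max_right _ _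
        _ ≤ N := Finset.le_sup (f := fun pq => max (T.dist pq.1 v₀) (T.dist pq.2 v₀)) hpqs
  -- every vertex of W that is not alone is close to v₀
  have hdepth : ∀ x ∈ W, ∀ y ∈ W, x ≠ y → T.dist x v₀ ≤ N := by
    intro x hx y hy hxy
    obtain ⟨p, hp⟩ := hWconn x hx y hy
    cases p with
    | nil => exact absurd rfl hxy
    | cons hadj q =>
      exact hbound _ _ hadj hx (hp _ (by simp [SimpleGraph.Walk.support_cons,
        q.start_mem_support]))
  refine ⟨2 * N, fun x hx y hy p hp => ?_⟩
  by_cases hxy : x = y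
  · subst hxy
    have : p = SimpleGraph.Walk.nil := (SimpleGraph.Walk.isPath_iff_eq_nil (p := p)).mp hp
    simp [this]
  · -- p is the unique path, hence has length dist x y
    obtain ⟨q, hq⟩ := hconn.exists_walk_length_eq_dist x y
    have hpq : (⟨p, hp⟩ : T.Path x y) = q.toPath := hT.IsAcyclic.path_unique _ _
    have hlen : p.length = (q.toPath : T.Walk x y).length := by
      rw [← hpq]
    have h1 : p.length ≤ T.dist x y := by
      rw [hlen, ← hq]
      exact q.length_bypass_le
    calc p.length ≤ T.dist x y := h1
      _ ≤ T.dist x v₀ + T.dist v₀ y := hconn.dist_triangle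
      _ ≤ N + N := by
          gcongr
          · exact hdepth x hx y hy hxy
          · rw [SimpleGraph.dist_comm]
            exact hdepth y hy x hx (Ne.symm hxy)
      _ = 2 * N := (two_mul N).symm
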